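/- The subset f⁻¹((0,0,0))⁺ = f⁻¹({(0, 0, 0)}) ∩ {z : Re(z₁z₂z₃) ≥ 0} of ℂ³ equals {(t e^{iα}, t e^{iβ}, t e^{iγ}) : t ∈ ℝ, t ≥ 0, α, β, γ ∈ ℝ, α + β + γ = 0}; in particular it is a cone over a 2-torus, i.e. it is closed under multiplication by nonnegative real scalars. -/

import Mathlib

open Complex

/-- The Harvey–Lawson map `f : ℂ³ → ℝ³`. -/
noncomputable def HarveyLawson (z : Fin 3 → ℂ) : Fin 3 → ℝ :=
  ![(z 0 * z 1 * z 2).im,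
    ‖z 0‖ ^ 2 - ‖z 1‖ ^ 2,
    ‖z 0‖ ^ 2 - ‖z 2‖ ^ 2]

/-- The half `f⁻¹((0,0,0))⁺` of the Harvey–Lawson fiber over the origin is the set
`{(t e^{iα}, t e^{iβ}, t e^{iγ}) : t ≥ 0, α + β + γ = 0}`; in particular it is a cone,
i.e. closed under multiplication by nonnegative real scalars. -/
theorem harveyLawson_central_fiber_plus_cone :
    (HarveyLawson ⁻¹' {![0, 0, 0]}) ∩ {z : Fin 3 → ℂ | 0 ≤ (z 0 * z 1 * z 2).re} =
      {z : Fin 3 → ℂ | ∃ t : ℝ, 0 ≤ t ∧ ∃ α β γ : ℝ, α + β + γ = 0 ∧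
        z = ![(t : ℂ) * Complex.exp (α * Complex.I),
              (t : ℂ) * Complex.exp (β * Complex.I),
              (t : ℂ) * Complex.exp (γ * Complex.I)]} ∧
    ∀ z ∈ (HarveyLawson ⁻¹' {![0, 0, 0]}) ∩
        {z : Fin 3 → ℂ | 0 ≤ (z 0 * z 1 * z 2).re},
      ∀ s : ℝ, 0 ≤ s →
        (fun j => (s : ℂ) * z j) ∈ (HarveyLawson ⁻¹' {![0, 0, 0]}) ∩
          {z : Fin 3 → ℂ | 0 ≤ (z 0 * z 1 * z 2).re} := by
  constructor
  · ext z
    simp only [Set.mem_inter_iff, Set.mem_preimage, Set.mem_singleton_iff, Set.mem_setOf_eq]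
    constructor
    · rintro ⟨hf, hre⟩
      have h0 : (z 0 * z 1 * z 2).im = 0 := by
        have := congrFun hf 0; simpa [HarveyLawson] using this
      have h1 : ‖z 0‖ ^ 2 - ‖z 1‖ ^ 2 = 0 := by
        have := congrFun hf 1; simpa [HarveyLawson] using this
      have h2 : ‖z 0‖ ^ 2 - ‖z 2‖ ^ 2 = 0 := by
        have := congrFun hf 2; simpa [HarveyLawson] using this
      have hab1 : ‖z 1‖ = ‖z 0‖ :=
        (sq_eq_sq₀ (norm_nonneg _) (norm_nonneg _)).mp (by linarith)
      have hab2 : ‖z 2‖ = ‖z 0‖ :=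
        (sq_eq_sq₀ (norm_nonneg _) (norm_nonneg _)).mp (by linarith)
      rcases eq_or_lt_of_le (norm_nonneg (z 0)) with h | ht
      · -- all zero
        have hz0 : z 0 = 0 := by
          rw [← norm_eq_zero]; exact h.symm
        have hz1 : z 1 = 0 := by
          rw [← norm_eq_zero, hab1]; exact h.symm
        have hz2 : z 2 = 0 := by
          rw [← norm_eq_zero, hab2]; exact h.symm
        refine ⟨0, le_refl 0, 0, 0, 0, by ring, ?_⟩
        funext j
        fin_cases j <;> simp [hz0, hz1, hz2]
      · set t : ℝ := ‖z 0‖ with htdef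
        set α : ℝ := Complex.arg (z 0) with hα
        set β : ℝ := Complex.arg (z 1) with hβ
        set δ : ℝ := Complex.arg (z 2) with hδ
        have e0 : z 0 = (t : ℂ) * Complex.exp (α * I) :=
          (Complex.norm_mul_exp_arg_mul_I (z 0)).symm
        have e1 : z 1 = (t : ℂ) * Complex.exp (β * I) := by
          conv_lhs => rw [← Complex.norm_mul_exp_arg_mul_I (z 1)]
          rw [hab1]
        have e2 : z 2 = (t : ℂ) * Complex.exp (δ * I) := by
          conv_lhs => rw [← Complex.norm_mul_exp_arg_mul_I (z 2)]
          rw [hab2]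
        have hp : z 0 * z 1 * z 2 = ((t ^ 3 : ℝ) : ℂ) * Complex.exp (((α + β + δ : ℝ) : ℂ) * I) := by
          rw [e0, e1, e2]
          push_cast
          rw [show ((α : ℂ) + β + δ) * I = α * I + β * I + δ * I by ring,
            Complex.exp_add, Complex.exp_add]
          ring
        set w : ℂ := Complex.exp (((α + β + δ : ℝ) : ℂ) * I) with hw
        have hwim : w.im = 0 := by
          have : t ^ 3 * w.im = 0 := by
            rw [← Complex.im_ofReal_mul, ← hp, h0]
          have ht3 : (0 : ℝ) < t ^ 3 := by positivity
          exact by nlinarith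
        have hwre : 0 ≤ w.re := by
          have : 0 ≤ t ^ 3 * w.re := by
            rw [← Complex.re_ofReal_mul, ← hp]; exact hre
          have ht3 : (0 : ℝ) < t ^ 3 := by positivity
          nlinarith
        have habs : ‖w‖ = 1 := Complex.norm_exp_ofReal_mul_I _
        have hsq : w.re ^ 2 + w.im ^ 2 = 1 := by
          have := Complex.sq_norm w
          rw [habs, Complex.normSq_apply] at this
          nlinarith
        have hwre1 : w.re = 1 := by nlinarith
        have hw1 : w = 1 := by
          apply Complex.ext <;> simp [hwre1, hwim]
        refine ⟨t, norm_nonneg _, α, β, -(α + β), by ring, ?_⟩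
        have e2' : z 2 = (t : ℂ) * Complex.exp ((-(α + β) : ℝ) * I) := by
          rw [e2]
          congr 1
          have : Complex.exp ((δ : ℂ) * I) =
              Complex.exp (((-(α + β) : ℝ) : ℂ) * I) * w := by
            rw [hw, ← Complex.exp_add]
            congr 1
            push_cast
            ring
          rw [this, hw1, mul_one]
        funext j
        fin_cases j
        · simpa using e0
        · simpa using e1
        · simpa using e2'
    · rintro ⟨t, ht, α, β, γ, hsum, rfl⟩
      have hp : ((t : ℂ) * Complex.exp (α * I)) * ((t : ℂ) * Complex.exp (β * I)) *
          ((t : ℂ) * Complex.exp (γ * I)) = ((t ^ 3 : ℝ) : ℂ) := by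
        rw [show ((t : ℂ) * Complex.exp (α * I)) * ((t : ℂ) * Complex.exp (β * I)) *
            ((t : ℂ) * Complex.exp (γ * I)) =
            (t : ℂ) ^ 3 * Complex.exp ((α : ℂ) * I + β * I + γ * I) by
          rw [Complex.exp_add, Complex.exp_add]; ring]
        rw [show ((α : ℂ) * I + β * I + γ * I) = ((α + β + γ : ℝ) : ℂ) * I by push_cast; ring,
          hsum]
        push_cast
        simp
      refine ⟨?_, ?_⟩
      · simp only [HarveyLawson, Matrix.cons_val_zero, Matrix.cons_val_one, Matrix.head_cons,
          Matrix.cons_val_two, Matrix.tail_cons]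
        rw [hp]
        simp [norm_mul, Complex.norm_exp_ofReal_mul_I, ← Complex.ofReal_pow]
      · simp only [Set.mem_setOf_eq, Matrix.cons_val_zero, Matrix.cons_val_one, Matrix.head_cons,
          Matrix.cons_val_two, Matrix.tail_cons]
        rw [hp]
        simp only [Complex.ofReal_re]
        positivity
  · rintro z ⟨hf, hre⟩ s hs
    have hprod : ((s : ℂ) * z 0) * ((s : ℂ) * z 1) * ((s : ℂ) * z 2)
        = ((s ^ 3 : ℝ) : ℂ) * (z 0 * z 1 * z 2) := by push_cast; ring
    have h0 : (z 0 * z 1 * z 2).im = 0 := by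
      have := congrFun hf 0; simpa [HarveyLawson] using this
    have h1 : ‖z 0‖ ^ 2 - ‖z 1‖ ^ 2 = 0 := by
      have := congrFun hf 1; simpa [HarveyLawson] using this
    have h2 : ‖z 0‖ ^ 2 - ‖z 2‖ ^ 2 = 0 := by
      have := congrFun hf 2; simpa [HarveyLawson] using this
    have ha1 : ‖(s : ℂ) * z 0‖ ^ 2 - ‖(s : ℂ) * z 1‖ ^ 2 = 0 := by
      simp only [norm_mul, mul_pow, Complex.norm_real, Real.norm_eq_abs]; nlinarith
    have ha2 : ‖(s : ℂ) * z 0‖ ^ 2 - ‖(s : ℂ) * z 2‖ ^ 2 = 0 := by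
      simp only [norm_mul, mul_pow, Complex.norm_real, Real.norm_eq_abs]; nlinarith
    constructor
    · show HarveyLawson _ = _
      simp only [HarveyLawson]
      rw [hprod, Complex.im_ofReal_mul, h0, mul_zero, ha1, ha2]
    · simp only [Set.mem_setOf_eq]
      rw [hprod, Complex.re_ofReal_mul]
      exact mul_nonneg (by positivity) hre
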